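/- Let H be a Hilbert space, n a positive natural number, and w a Hilbert–Schmidt operator on H with ‖w‖_HS ≤ √n. Suppose w restricts to the identity on an n-dimensional subspace F. Then the singular values of w satisfy s_k(w) = 1 for 1 ≤ k ≤ n and s_k(w) = 0 for k > n, so that ‖w‖_HS² = n. -/

import Mathlib

open scoped InnerProductSpace

private lemma aux_norm_sq_tsum {H : Type*} [NormedAddCommGroup H] [InnerProductSpace ℂ H]
    [CompleteSpace H] {f : ℕ → H} (hf : Orthonormal ℂ f) (c : ℕ → ℂ)
    (hc : Summable fun k => ‖c k‖ ^ 2) :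
    ‖∑' k, c k • f k‖ ^ 2 = ∑' k, ‖c k‖ ^ 2 := by
  have hsummable : Summable (fun k => c k • f k) := by
    have h := (hf.orthogonalFamily.summable_iff_norm_sq_summable c).2 (by simpa using hc)
    simpa [LinearIsometry.toSpanSingleton, LinearMap.toSpanSingleton_apply] using h
  set x := ∑' k, c k • f k with hxdef
  have hxs : HasSum (fun k => c k • f k) x := hsummable.hasSum
  have hcoef : ∀ j, ⟪f j, x⟫_ℂ = c j := by
    intro j
    have h1 : ⟪f j, x⟫_ℂ = ∑' k, ⟪f j, c k • f k⟫_ℂ :=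
      (innerSL ℂ (f j)).map_tsum hsummable
    rw [h1, tsum_eq_single j]
    · simp [inner_smul_right, orthonormal_iff_ite.mp hf, hf.1 j]
    · intro k hk
      simp [inner_smul_right, orthonormal_iff_ite.mp hf, Ne.symm hk]
  have hinner : ⟪x, x⟫_ℂ = ∑' k, ((‖c k‖ ^ 2 : ℝ) : ℂ) := by
    have h1 : ⟪x, x⟫_ℂ = ∑' k, ⟪x, c k • f k⟫_ℂ :=
      (innerSL ℂ x).map_tsum hsummable
    rw [h1]
    congr 1
    funext k
    rw [inner_smul_right, ← inner_conj_symm, hcoef k, mul_comm,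
      RCLike.conj_mul]
    norm_cast
  have h2 : ((∑' k, ‖c k‖ ^ 2 : ℝ) : ℂ) = ∑' k, ((‖c k‖ ^ 2 : ℝ) : ℂ) :=
    Complex.ofRealCLM.map_tsum hc
  have h3 : ⟪x, x⟫_ℂ = ((‖x‖ : ℂ)) ^ 2 := inner_self_eq_norm_sq_to_K x
  have : ((‖x‖ ^ 2 : ℝ) : ℂ) = ((∑' k, ‖c k‖ ^ 2 : ℝ) : ℂ) := by
    push_cast
    rw [← h3, hinner, ← h2]
    push_cast
    ring
  exact_mod_cast this

theorem stmt1 {H : Type*} [NormedAddCommGroup H] [InnerProductSpace ℂ H] [CompleteSpace H]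
    (w : H →L[ℂ] H) (n : ℕ) (hn : 0 < n)
    (s : ℕ → ℝ) (hs_nonneg : ∀ k, 0 ≤ s k) (hs_anti : Antitone s)
    (e f : ℕ → H) (he : Orthonormal ℂ e) (hf : Orthonormal ℂ f)
    (hsvd : ∀ x : H, w x = ∑' k, ((s k : ℂ) * ⟪e k, x⟫_ℂ) • f k)
    (hsum : Summable (fun k => s k ^ 2))
    (hHS : ∑' k, s k ^ 2 ≤ (n : ℝ))
    (F : Submodule ℂ H) (hF : Module.finrank ℂ F = n)
    (hfix : ∀ x ∈ F, w x = x) :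
    (∀ k < n, s k = 1) ∧ (∀ k, n ≤ k → s k = 0) ∧ ∑' k, s k ^ 2 = (n : ℝ) := by
  classical
  have hFD : FiniteDimensional ℂ F := FiniteDimensional.of_finrank_pos (hF ▸ hn)
  let b := stdOrthonormalBasis ℂ F
  let u : Fin n → H := fun i => (b (Fin.cast hF.symm i) : H)
  have hb := b.orthonormal
  have hu : Orthonormal ℂ u := by
    constructor
    · intro i
      have := hb.1 (Fin.cast hF.symm i)
      exact this
    · intro i j hij
      have hij' : Fin.cast hF.symm i ≠ Fin.cast hF.symm j := by
        simpa [Fin.ext_iff] using hij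
      have := hb.2 hij'
      simpa [u, Submodule.coe_inner] using this
  have huF : ∀ i, u i ∈ F := fun i => (b (Fin.cast hF.symm i)).2
  -- Step A
  have hA : ∀ x ∈ F, ‖x‖ ^ 2 = ∑' k, s k ^ 2 * ‖⟪e k, x⟫_ℂ‖ ^ 2 := by
    intro x hx
    have hnorm : ∀ k, ‖(s k : ℂ) * ⟪e k, x⟫_ℂ‖ ^ 2 = s k ^ 2 * ‖⟪e k, x⟫_ℂ‖ ^ 2 := by
      intro k
      rw [norm_mul, mul_pow, Complex.norm_real, Real.norm_eq_abs, abs_of_nonneg (hs_nonneg k)]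
    have hcs : Summable fun k => ‖(s k : ℂ) * ⟪e k, x⟫_ℂ‖ ^ 2 := by
      refine Summable.of_nonneg_of_le (fun k => by positivity) (fun k => ?_)
        (hsum.mul_right (‖x‖ ^ 2))
      rw [hnorm k]
      have h1 : ‖⟪e k, x⟫_ℂ‖ ≤ ‖x‖ := by
        have := norm_inner_le_norm (𝕜 := ℂ) (e k) x
        simpa [he.1 k] using this
      have h2 : ‖⟪e k, x⟫_ℂ‖ ^ 2 ≤ ‖x‖ ^ 2 := by
        have := norm_nonneg ⟪e k, x⟫_ℂ
        nlinarith
      nlinarith [sq_nonneg (s k)]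
    have key := aux_norm_sq_tsum hf (fun k => (s k : ℂ) * ⟪e k, x⟫_ℂ) hcs
    rw [← hsvd x, hfix x hx] at key
    rw [key]
    exact tsum_congr hnorm
  -- Step B
  set c : ℕ → ℝ := fun k => ∑ i : Fin n, ‖⟪e k, u i⟫_ℂ‖ ^ 2 with hcdef
  have hc_nonneg : ∀ k, 0 ≤ c k := fun k => Finset.sum_nonneg fun i _ => by positivity
  have hc_le : ∀ k, c k ≤ 1 := by
    intro k
    have h1 : ∑ i : Fin n, ‖⟪u i, e k⟫_ℂ‖ ^ 2 ≤ ‖e k‖ ^ 2 := hu.sum_inner_products_le (e k)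
    have h2 : c k = ∑ i : Fin n, ‖⟪u i, e k⟫_ℂ‖ ^ 2 := by
      simp [hcdef, norm_inner_symm]
    rw [h2]
    calc ∑ i : Fin n, ‖⟪u i, e k⟫_ℂ‖ ^ 2 ≤ ‖e k‖ ^ 2 := h1
      _ = 1 := by rw [he.1 k]; norm_num
  have hsum_i : ∀ i : Fin n, Summable fun k => s k ^ 2 * ‖⟪e k, u i⟫_ℂ‖ ^ 2 := by
    intro i
    refine Summable.of_nonneg_of_le (fun k => by positivity) (fun k => ?_)
      (hsum.mul_right (‖u i‖ ^ 2))
    have h1 : ‖⟪e k, u i⟫_ℂ‖ ≤ ‖u i‖ := by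
      have := norm_inner_le_norm (𝕜 := ℂ) (e k) (u i)
      simpa [he.1 k] using this
    have h2 := norm_nonneg ⟪e k, u i⟫_ℂ
    refine mul_le_mul_of_nonneg_left ?_ (sq_nonneg (s k))
    nlinarith
  have hsc : Summable fun k => s k ^ 2 * c k := by
    refine Summable.of_nonneg_of_le (fun k => mul_nonneg (sq_nonneg _) (hc_nonneg k))
      (fun k => mul_le_of_le_one_right (sq_nonneg _) (hc_le k)) hsum
  have hB : ∑' k, s k ^ 2 * c k = (n : ℝ) := by
    have h1 : ∑' k, s k ^ 2 * c k = ∑ i : Fin n, ∑' k, s k ^ 2 * ‖⟪e k, u i⟫_ℂ‖ ^ 2 := by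
      rw [← Summable.tsum_finsetSum (fun i _ => hsum_i i)]
      refine tsum_congr fun k => ?_
      rw [hcdef, Finset.mul_sum]
    rw [h1]
    have h2 : ∀ i : Fin n, ∑' k, s k ^ 2 * ‖⟪e k, u i⟫_ℂ‖ ^ 2 = 1 := by
      intro i
      rw [← hA (u i) (huF i), hu.1 i]
      norm_num
    rw [Finset.sum_congr rfl fun i _ => h2 i]
    simp
  have hle1 : ∑' k, s k ^ 2 * c k ≤ ∑' k, s k ^ 2 :=
    Summable.tsum_le_tsum (fun k => mul_le_of_le_one_right (sq_nonneg _) (hc_le k)) hsc hsum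
  have htsum : ∑' k, s k ^ 2 = (n : ℝ) := le_antisymm hHS (hB ▸ hle1)
  have hpt : ∀ k, s k ^ 2 * c k = s k ^ 2 := by
    intro k
    by_contra hne
    have hlt : s k ^ 2 * c k < s k ^ 2 :=
      lt_of_le_of_ne (mul_le_of_le_one_right (sq_nonneg _) (hc_le k)) hne
    have := Summable.tsum_lt_tsum_of_nonneg
      (fun j => mul_nonneg (sq_nonneg _) (hc_nonneg j))
      (fun j => mul_le_of_le_one_right (sq_nonneg _) (hc_le j)) hlt hsum
    rw [hB, htsum] at this
    exact lt_irrefl _ this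
  -- Step C : each s k is 0 or 1
  have hdich : ∀ k, s k = 0 ∨ s k = 1 := by
    intro k
    rcases eq_or_ne (s k) 0 with h0 | h0
    · exact Or.inl h0
    right
    have hk2 : s k ^ 2 ≠ 0 := pow_ne_zero _ h0
    have hck : c k = 1 := by
      have h := hpt k
      have : s k ^ 2 * c k = s k ^ 2 * 1 := by rw [h, mul_one]
      exact mul_left_cancel₀ hk2 this
    set y : H := ∑ i : Fin n, ⟪u i, e k⟫_ℂ • u i with hy
    have hyF : y ∈ F := Submodule.sum_mem _ fun i _ => Submodule.smul_mem _ _ (huF i)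
    have hui : ∀ i, ⟪u i, y⟫_ℂ = ⟪u i, e k⟫_ℂ := by
      intro i
      rw [hy, inner_sum]
      simp [inner_smul_right, orthonormal_iff_ite.mp hu]
    have horth : ⟪y, e k - y⟫_ℂ = 0 := by
      rw [hy, sum_inner]
      refine Finset.sum_eq_zero fun i _ => ?_
      rw [inner_smul_left, inner_sub_right, hui i, sub_self, mul_zero]
    have hny : ‖y‖ ^ 2 = c k := by
      have h1 : ⟪y, y⟫_ℂ = ∑ i : Fin n, (starRingEnd ℂ) ⟪u i, e k⟫_ℂ * ⟪u i, e k⟫_ℂ :=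
        hu.inner_sum _ _ _
      have h2 : ⟪y, y⟫_ℂ = ((‖y‖ : ℂ)) ^ 2 := inner_self_eq_norm_sq_to_K y
      have h3 : ((‖y‖ ^ 2 : ℝ) : ℂ) = ((c k : ℝ) : ℂ) := by
        push_cast
        rw [← h2, h1, hcdef]
        push_cast
        refine Finset.sum_congr rfl fun i _ => ?_
        rw [RCLike.conj_mul, norm_inner_symm]
        norm_cast
      exact_mod_cast h3
    have hpyth : ‖e k‖ ^ 2 = ‖y‖ ^ 2 + 2 * (RCLike.re ⟪y, e k - y⟫_ℂ) + ‖e k - y‖ ^ 2 := by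
      have := norm_add_sq (𝕜 := ℂ) y (e k - y)
      rwa [add_sub_cancel] at this
    have hek1 : ‖e k‖ ^ 2 = 1 := by rw [he.1 k]; norm_num
    have hzero : ‖e k - y‖ ^ 2 = 0 := by
      rw [horth] at hpyth
      rw [hek1, hny, hck] at hpyth
      simpa using hpyth.symm
    have hekF : e k ∈ F := by
      have h1 : e k - y = 0 := by
        have := pow_eq_zero_iff (n := 2) (by norm_num) |>.mp hzero
        simpa [norm_eq_zero] using this
      have : e k = y := sub_eq_zero.mp h1
      rw [this]; exact hyF
    have hwk : w (e k) = e k := hfix _ hekF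
    have hsvdk : w (e k) = (s k : ℂ) • f k := by
      rw [hsvd, tsum_eq_single k]
      · simp [orthonormal_iff_ite.mp he, he.1 k]
      · intro j hj
        simp [orthonormal_iff_ite.mp he, hj]
    have hnn : (1 : ℝ) = s k := by
      have h1 : ‖e k‖ = ‖(s k : ℂ) • f k‖ := by rw [← hwk, hsvdk]
      rw [he.1 k, norm_smul, hf.1 k, mul_one, Complex.norm_real, Real.norm_eq_abs,
        abs_of_nonneg (hs_nonneg k)] at h1
      exact h1
    exact hnn.symm
  have hs_le_one : ∀ k, s k ≤ 1 := fun k => by rcases hdich k with h | h <;> rw [h] <;> norm_num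
  -- Step D
  have h_pred : s (n - 1) = 1 := by
    rcases hdich (n - 1) with h0 | h1
    · exfalso
      have hzero : ∀ k, n - 1 ≤ k → s k = 0 := fun k hk =>
        le_antisymm (h0 ▸ hs_anti hk) (hs_nonneg k)
      have heq : ∑' k, s k ^ 2 = ∑ k ∈ Finset.range (n - 1), s k ^ 2 := by
        refine tsum_eq_sum fun k hk => ?_
        rw [hzero k (by simpa [Finset.mem_range, not_lt] using hk)]
        ring
      have hle : ∑ k ∈ Finset.range (n - 1), s k ^ 2 ≤ ((n - 1 : ℕ) : ℝ) := by
        calc ∑ k ∈ Finset.range (n - 1), s k ^ 2 ≤ ∑ _k ∈ Finset.range (n - 1), (1 : ℝ) :=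
              Finset.sum_le_sum fun k _ => by nlinarith [hs_le_one k, hs_nonneg k]
          _ = ((n - 1 : ℕ) : ℝ) := by simp
      rw [htsum] at heq
      have h2 : (n : ℝ) ≤ ((n - 1 : ℕ) : ℝ) := heq ▸ hle
      have h3 : n ≤ n - 1 := by exact_mod_cast h2
      omega
    · exact h1
  refine ⟨?_, ?_, htsum⟩
  · intro k hk
    have h1 : 1 ≤ s k := h_pred ▸ hs_anti (by omega : k ≤ n - 1)
    exact le_antisymm (hs_le_one k) h1
  · intro k hk
    have hsn : s n = 0 := by
      rcases hdich n with h | h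
      · exact h
      exfalso
      have hone : ∀ j, j ≤ n → s j = 1 := fun j hj =>
        le_antisymm (hs_le_one j) (h ▸ hs_anti hj)
      have hle := Summable.sum_le_tsum (Finset.range (n + 1)) (fun k _ => sq_nonneg (s k)) hsum
      rw [htsum] at hle
      have hsumeq : ∑ k ∈ Finset.range (n + 1), s k ^ 2 = ((n + 1 : ℕ) : ℝ) := by
        rw [Finset.sum_congr rfl (fun j hj => by
          rw [hone j (by simpa [Finset.mem_range, Nat.lt_succ_iff] using hj)]
          norm_num : ∀ j ∈ Finset.range (n + 1), s j ^ 2 = 1)]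
        simp
      rw [hsumeq] at hle
      have : (n + 1 : ℕ) ≤ n := by exact_mod_cast hle
      omega
    exact le_antisymm (hsn ▸ hs_anti hk) (hs_nonneg k)
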